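/- If X₁ ~ Bernoulli(1/2) and X₂ ~ N(0, σ²) are independent, then X = X₁ + X₂ is not reasonable with respect to cos for any σ > 0: |φ_X| vanishes at odd multiples of π but is not identically zero beyond them, hence |φ_X| is not decreasing on [0,∞). -/

import Mathlib

open MeasureTheory ProbabilityTheory Set
open scoped NNReal ENNReal Real

lemma aux_dirac_integrable (f : ℝ → ℂ) (a : ℝ) : Integrable f (Measure.dirac a) :=
  (integrable_const (f a)).congr (ae_eq_dirac f).symm

lemma aux_ber_integral (f : ℝ → ℂ) :
    ∫ x, f x ∂(ENNReal.ofReal (1 / 2) • Measure.dirac (1 : ℝ) +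
      ENNReal.ofReal (1 / 2) • Measure.dirac (0 : ℝ)) = (1/2 : ℂ) * (f 1 + f 0) := by
  have h1 : Integrable f (ENNReal.ofReal (1/2) • Measure.dirac (1:ℝ)) :=
    (aux_dirac_integrable f 1).smul_measure ENNReal.ofReal_ne_top
  have h0 : Integrable f (ENNReal.ofReal (1/2) • Measure.dirac (0:ℝ)) :=
    (aux_dirac_integrable f 0).smul_measure ENNReal.ofReal_ne_top
  rw [integral_add_measure h1 h0, integral_smul_measure, integral_smul_measure,
    integral_dirac, integral_dirac, ENNReal.toReal_ofReal (by norm_num : (0:ℝ) ≤ 1/2)]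
  simp [Complex.real_smul]
  ring

lemma aux_gauss_ne_zero (v : ℝ≥0) (hv : v ≠ 0) (t : ℝ) :
    ∫ y, Complex.exp (Complex.I * (↑t * ↑y)) ∂(gaussianReal 0 v) ≠ 0 := by
  have hv' : (0:ℝ) < v := NNReal.coe_pos.mpr (pos_iff_ne_zero.mpr hv)
  set b : ℝ := 1 / (2 * (v:ℝ)) with hbdef
  have hbpos : 0 < b := by positivity
  have hbre : 0 < ((b:ℂ)).re := by simpa using hbpos
  rw [gaussianReal_of_var_ne_zero 0 hv]
  have hpdf : gaussianPDF 0 v = fun x => ((Real.toNNReal (gaussianPDFReal 0 v x) : ℝ≥0) : ℝ≥0∞) :=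
    rfl
  rw [hpdf, integral_withDensity_eq_integral_smul
    ((measurable_gaussianPDFReal 0 v).real_toNNReal) _]
  have heq : ∀ x : ℝ, (Real.toNNReal (gaussianPDFReal 0 v x)) • Complex.exp (Complex.I * (↑t * ↑x))
      = ((Real.sqrt (2 * Real.pi * v))⁻¹ : ℂ) *
        (Complex.exp (Complex.I * ↑t * ↑x) * Complex.exp (-(b:ℂ) * ↑x ^ 2)) := by
    intro x
    rw [NNReal.smul_def, Real.coe_toNNReal _ (gaussianPDFReal_nonneg 0 v x), gaussianPDFReal,
      Complex.real_smul]
    push_cast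
    have e2 : (-((x:ℂ) - 0) ^ 2 / (2 * ((v:ℝ):ℂ))) = -(b:ℂ) * (x:ℂ) ^ 2 := by
      rw [hbdef]
      push_cast
      have h2v : (2 * ((v:ℝ):ℂ)) ≠ 0 := by
        refine mul_ne_zero two_ne_zero (Complex.ofReal_ne_zero.mpr hv'.ne')
      field_simp
      ring
    rw [e2]
    ring
  simp_rw [heq]
  rw [integral_const_mul, fourierIntegral_gaussian hbre (t:ℂ)]
  refine mul_ne_zero ?_ (mul_ne_zero ?_ (Complex.exp_ne_zero _))
  · exact inv_ne_zero (Complex.ofReal_ne_zero.mpr (Real.sqrt_ne_zero'.mpr (by positivity)))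
  · rw [Ne, Complex.cpow_eq_zero_iff]
    rintro ⟨h, -⟩
    exact (div_ne_zero (Complex.ofReal_ne_zero.mpr Real.pi_ne_zero)
      (Complex.ofReal_ne_zero.mpr hbpos.ne')) h

lemma aux_prod_mul (μ ν : Measure ℝ) [IsProbabilityMeasure μ] [IsProbabilityMeasure ν]
    (F G : ℝ → ℂ) (hF : Continuous F) (hG : Continuous G)
    (hFb : ∀ x, ‖F x‖ ≤ 1) (hGb : ∀ x, ‖G x‖ ≤ 1) :
    ∫ p : ℝ × ℝ, F p.1 * G p.2 ∂(μ.prod ν) = (∫ x, F x ∂μ) * ∫ x, G x ∂ν := by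
  have hint : Integrable (fun p : ℝ × ℝ => F p.1 * G p.2) (μ.prod ν) := by
    refine Integrable.mono' (integrable_const 1)
      (((hF.comp continuous_fst).mul (hG.comp continuous_snd)).aestronglyMeasurable) ?_
    filter_upwards with p
    calc ‖F p.1 * G p.2‖ = ‖F p.1‖ * ‖G p.2‖ := norm_mul _ _
    _ ≤ 1 * 1 := mul_le_mul (hFb _) (hGb _) (norm_nonneg _) zero_le_one
    _ = 1 := one_mul 1
  rw [integral_prod _ hint]
  simp_rw [integral_const_mul, integral_mul_const]

/-- If `X₁ ~ Bernoulli(1/2)` and `X₂ ~ N(0,σ²)` are independent, then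
`X = X₁ + X₂` is not reasonable with respect to `cos` for any `σ > 0`: `|φ_X|` is not
decreasing on `[0,∞)` and `d ↦ sup_a E[cos(a + dX)]` is not decreasing on `(0,∞)`. -/
theorem stmt12 {Ω : Type*} [MeasurableSpace Ω] (P : Measure Ω) [IsProbabilityMeasure P]
    (X₁ X₂ : Ω → ℝ) (hX₁ : Measurable X₁) (hX₂ : Measurable X₂)
    (hindep : IndepFun X₁ X₂ P)
    (hBer : P.map X₁ = ENNReal.ofReal (1 / 2) • Measure.dirac (1 : ℝ) +
      ENNReal.ofReal (1 / 2) • Measure.dirac (0 : ℝ))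
    (σ : NNReal) (hσ : 0 < σ)
    (hGauss : P.map X₂ = gaussianReal 0 (σ ^ 2))
    (X : Ω → ℝ) (hXdef : X = X₁ + X₂)
    (φ : ℝ → ℂ) (hφ : ∀ t : ℝ, φ t = ∫ ω, Complex.exp (Complex.I * (t * X ω)) ∂P) :
    ¬ AntitoneOn (fun t : ℝ => ‖φ t‖) (Ici 0) ∧
      ¬ AntitoneOn (fun d : ℝ => ⨆ a : ℝ, ∫ ω, Real.cos (a + d * X ω) ∂P) (Ioi 0) := by
  have hXm : Measurable X := by rw [hXdef]; exact hX₁.add hX₂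
  have hpair := (indepFun_iff_map_prod_eq_prod_map_map hX₁.aemeasurable hX₂.aemeasurable).mp hindep
  -- factorization of the characteristic function
  have hfact : ∀ t : ℝ, φ t = (∫ x, Complex.exp (Complex.I * (↑t * ↑x)) ∂(P.map X₁)) *
      (∫ x, Complex.exp (Complex.I * (↑t * ↑x)) ∂(P.map X₂)) := by
    intro t
    rw [hφ]
    have h1 : ∀ ω, Complex.exp (Complex.I * (↑t * ↑(X ω))) =
        (fun p : ℝ × ℝ => Complex.exp (Complex.I * (↑t * ↑p.1)) *
          Complex.exp (Complex.I * (↑t * ↑p.2))) (X₁ ω, X₂ ω) := by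
      intro ω
      simp only [hXdef, Pi.add_apply]
      rw [← Complex.exp_add]
      congr 1
      push_cast
      ring
    simp_rw [h1]
    have c1 : Continuous fun p : ℝ × ℝ => Complex.exp (Complex.I * (↑t * ↑p.1)) :=
      Complex.continuous_exp.comp (continuous_const.mul
        (continuous_const.mul (Complex.continuous_ofReal.comp continuous_fst)))
    have c2 : Continuous fun p : ℝ × ℝ => Complex.exp (Complex.I * (↑t * ↑p.2)) :=
      Complex.continuous_exp.comp (continuous_const.mul
        (continuous_const.mul (Complex.continuous_ofReal.comp continuous_snd)))
    have hg : AEStronglyMeasurable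
        (fun p : ℝ × ℝ => Complex.exp (Complex.I * (↑t * ↑p.1)) *
          Complex.exp (Complex.I * (↑t * ↑p.2)))
        (P.map (fun ω => (X₁ ω, X₂ ω))) := (c1.mul c2).aestronglyMeasurable
    have h2 : ∫ ω, Complex.exp (Complex.I * (↑t * ↑(X₁ ω))) *
          Complex.exp (Complex.I * (↑t * ↑(X₂ ω))) ∂P
        = ∫ p : ℝ × ℝ, Complex.exp (Complex.I * (↑t * ↑p.1)) *
            Complex.exp (Complex.I * (↑t * ↑p.2)) ∂(P.map (fun ω => (X₁ ω, X₂ ω))) :=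
      (integral_map (hX₁.aemeasurable.prodMk hX₂.aemeasurable) hg).symm
    haveI : IsProbabilityMeasure (P.map X₁) := Measure.isProbabilityMeasure_map hX₁.aemeasurable
    haveI : IsProbabilityMeasure (P.map X₂) := Measure.isProbabilityMeasure_map hX₂.aemeasurable
    rw [h2, hpair]
    have hc : Continuous fun x : ℝ => Complex.exp (Complex.I * (↑t * ↑x)) :=
      Complex.continuous_exp.comp (continuous_const.mul
        (continuous_const.mul Complex.continuous_ofReal))
    have hbd : ∀ x : ℝ, ‖Complex.exp (Complex.I * (↑t * ↑x))‖ ≤ 1 := by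
      intro x
      rw [Complex.norm_exp]
      have : (Complex.I * (↑t * ↑x)).re = 0 := by simp
      rw [this, Real.exp_zero]
    exact aux_prod_mul (P.map X₁) (P.map X₂) _ _ hc hc hbd hbd
  -- value of the Bernoulli factor
  have hber : ∀ t : ℝ, ∫ x, Complex.exp (Complex.I * (↑t * ↑x)) ∂(P.map X₁)
      = (1/2 : ℂ) * (Complex.exp (Complex.I * ↑t) + 1) := by
    intro t
    rw [hBer, aux_ber_integral]
    norm_num
  have hσ2 : (σ ^ 2 : ℝ≥0) ≠ 0 := pow_ne_zero 2 hσ.ne'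
  -- φ vanishes at π
  have hπ : φ Real.pi = 0 := by
    rw [hfact, hber]
    have : Complex.exp (Complex.I * ↑Real.pi) = -1 := by
      rw [mul_comm]; exact Complex.exp_pi_mul_I
    rw [this]
    ring
  -- φ does not vanish at 2π
  have h2π : φ (2 * Real.pi) ≠ 0 := by
    rw [hfact, hber, hGauss]
    have : Complex.exp (Complex.I * ↑(2 * Real.pi)) = 1 := by
      rw [mul_comm]; push_cast; exact Complex.exp_two_pi_mul_I
    rw [this]
    have h1 : (1/2 : ℂ) * (1 + 1) = 1 := by norm_num
    rw [h1, one_mul]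
    exact aux_gauss_ne_zero _ hσ2 _
  -- the integral of cos in terms of φ
  have hint : ∀ (c d : ℝ), ∫ ω, Real.cos (c + d * X ω) ∂P
      = (Complex.exp (Complex.I * ↑c) * φ d).re := by
    intro c d
    have hInt : Integrable (fun ω => Complex.exp (Complex.I * (↑c + ↑d * ↑(X ω)))) P := by
      refine Integrable.mono' (integrable_const 1) ?_ ?_
      · exact (Complex.measurable_exp.comp (measurable_const.mul
          (measurable_const.add (measurable_const.mul
            (Complex.measurable_ofReal.comp hXm))))).aestronglyMeasurable
      · filter_upwards with ω
        rw [Complex.norm_exp]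
        have : (Complex.I * (↑c + ↑d * ↑(X ω))).re = 0 := by simp
        rw [this, Real.exp_zero]
    have hre0 : ∀ θ : ℝ, (Complex.exp (Complex.I * ↑θ)).re = Real.cos θ := by
      intro θ
      rw [mul_comm, Complex.exp_mul_I]
      simp [Complex.cos_ofReal_re]
    have hre : ∀ ω, Real.cos (c + d * X ω)
        = (Complex.exp (Complex.I * (↑c + ↑d * ↑(X ω)))).re := by
      intro ω
      have harg : ((c:ℂ) + ↑d * ↑(X ω)) = ((c + d * X ω : ℝ) : ℂ) := by push_cast; ring
      rw [harg, hre0]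
    simp_rw [hre]
    rw [← RCLike.re_eq_complex_re, integral_re hInt]
    congr 1
    have hsplit : ∀ ω, Complex.exp (Complex.I * (↑c + ↑d * ↑(X ω)))
        = Complex.exp (Complex.I * ↑c) * Complex.exp (Complex.I * (↑d * ↑(X ω))) := by
      intro ω
      rw [← Complex.exp_add]
      congr 1
      ring
    simp_rw [hsplit]
    rw [integral_const_mul, hφ d]
  -- the sup over a equals |φ d|
  have hbound : ∀ (d a : ℝ), ∫ ω, Real.cos (a + d * X ω) ∂P ≤ ‖φ d‖ := by
    intro d a
    rw [hint]
    calc (Complex.exp (Complex.I * ↑a) * φ d).re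
        ≤ ‖Complex.exp (Complex.I * ↑a) * φ d‖ := Complex.re_le_norm _
    _ = ‖φ d‖ := by
        rw [norm_mul, Complex.norm_exp]
        have : (Complex.I * (↑a : ℂ)).re = 0 := by simp
        rw [this, Real.exp_zero, one_mul]
  have hsup : ∀ d : ℝ, (⨆ a : ℝ, ∫ ω, Real.cos (a + d * X ω) ∂P) = ‖φ d‖ := by
    intro d
    apply le_antisymm
    · exact ciSup_le (hbound d)
    · refine le_ciSup_of_le ⟨‖φ d‖, ?_⟩ (-(φ d).arg) ?_
      · rintro x ⟨a, rfl⟩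
        exact hbound d a
      · rw [hint]
        have hz : ∀ z : ℂ, Complex.exp (Complex.I * ↑(-z.arg)) * z = (‖z‖ : ℂ) := by
          intro z
          calc Complex.exp (Complex.I * ↑(-z.arg)) * z
              = Complex.exp (Complex.I * ↑(-z.arg)) *
                ((‖z‖ : ℂ) * Complex.exp (↑z.arg * Complex.I)) := by
                rw [Complex.norm_mul_exp_arg_mul_I]
          _ = (‖z‖ : ℂ) *
                (Complex.exp (Complex.I * ↑(-z.arg)) * Complex.exp (↑z.arg * Complex.I)) := by
                ring
          _ = (‖z‖ : ℂ) := by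
                rw [← Complex.exp_add]
                have h0 : Complex.I * ↑(-z.arg) + ↑z.arg * Complex.I = 0 := by push_cast; ring
                rw [h0, Complex.exp_zero, mul_one]
        rw [hz (φ d), Complex.ofReal_re]
  have hππ : (0:ℝ) < Real.pi := Real.pi_pos
  constructor
  · intro h
    have h1 : ‖φ (2 * Real.pi)‖ ≤ ‖φ Real.pi‖ :=
      h (mem_Ici.mpr hππ.le) (mem_Ici.mpr (by linarith)) (by linarith)
    rw [hπ, norm_zero] at h1
    exact h2π (norm_eq_zero.mp (le_antisymm h1 (norm_nonneg _)))
  · intro h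
    have h1 : (⨆ a : ℝ, ∫ ω, Real.cos (a + (2 * Real.pi) * X ω) ∂P)
        ≤ ⨆ a : ℝ, ∫ ω, Real.cos (a + Real.pi * X ω) ∂P :=
      h (mem_Ioi.mpr hππ) (mem_Ioi.mpr (by linarith)) (by linarith)
    rw [hsup, hsup, hπ, norm_zero] at h1
    exact h2π (norm_eq_zero.mp (le_antisymm h1 (norm_nonneg _)))
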